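/- Asymptotic variance of the quadratic variation of fractional Brownian motion, case H < 3/4. Let H ∈ (0, 3/4), let ρ(r) = (1/2)(|r+1|^{2H} + |r−1|^{2H} − 2|r|^{2H}) for r ∈ ℤ, and set σ_n² = 2 Σ_{|r|<n} (n − |r|) ρ(r)² for n ≥ 1. Then Σ_{r∈ℤ} ρ(r)² < ∞ and σ_n²/n → 2 Σ_{r∈ℤ} ρ(r)² as n → ∞. -/

import Mathlib

open Filter Real Finset

/-- The covariance function of the unit increments of fractional Brownian motion
with Hurst parameter `H`: `ρ(r) = (1/2)(|r+1|^{2H} + |r−1|^{2H} − 2|r|^{2H})`. -/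
noncomputable def fbmRho (H : ℝ) (r : ℤ) : ℝ :=
  (1 / 2) * (|(r : ℝ) + 1| ^ (2 * H) + |(r : ℝ) - 1| ^ (2 * H) -
    2 * |(r : ℝ)| ^ (2 * H))

/-- The variance `σ_n² = 2 Σ_{|r|<n} (n − |r|) ρ(r)²` of the quadratic variation
of fractional Brownian motion. -/
noncomputable def fbmSigmaSq (H : ℝ) (n : ℕ) : ℝ :=
  2 * ∑ r ∈ Finset.Ioo (-(n : ℤ)) (n : ℤ), ((n : ℝ) - |(r : ℝ)|) * (fbmRho H r) ^ 2

lemma fbmRho_neg (H : ℝ) (r : ℤ) : fbmRho H (-r) = fbmRho H r := by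
  simp only [fbmRho]
  push_cast
  rw [show -(r:ℝ) + 1 = -((r:ℝ) - 1) by ring, show -(r:ℝ) - 1 = -((r:ℝ) + 1) by ring,
    abs_neg, abs_neg, abs_neg]
  ring

lemma abs_fbmRho_le (H : ℝ) (h0 : 0 < H) (h1 : H < 1) (r : ℤ) (hr : 2 ≤ r) :
    |fbmRho H r| ≤ H * |2 * H - 1| * ((r : ℝ) - 1) ^ (2 * H - 2) := by
  have ha : (2 : ℝ) ≤ (r : ℝ) := by exact_mod_cast hr
  set a : ℝ := (r : ℝ) with ha_def
  set G : ℝ → ℝ := fun x => (x + 1) ^ (2 * H) - x ^ (2 * H) with hG_def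
  set G' : ℝ → ℝ := fun x => 2 * H * ((x + 1) ^ (2 * H - 1) - x ^ (2 * H - 1)) with hG'_def
  have hG : ∀ x : ℝ, 0 < x → HasDerivAt G (G' x) x := by
    intro x hx
    have h1' : HasDerivAt (fun y : ℝ => (y + 1) ^ (2 * H)) (1 * (2 * H) * (x + 1) ^ (2 * H - 1)) x :=
      ((hasDerivAt_id x).add_const 1).rpow_const (Or.inl (by positivity))
    have h2' : HasDerivAt (fun y : ℝ => y ^ (2 * H)) (1 * (2 * H) * x ^ (2 * H - 1)) x :=
      (hasDerivAt_id x).rpow_const (Or.inl (ne_of_gt hx))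
    have := h1'.sub h2'
    convert this using 1
    · rfl
    · rfl
    · rfl
    simp only [hG'_def]; ring
  have hrho : fbmRho H r = (1 / 2) * (G a - G (a - 1)) := by
    simp only [fbmRho, hG_def]
    rw [abs_of_pos (by linarith), abs_of_pos (by linarith), abs_of_pos (by linarith)]
    ring_nf
    simp only [ha_def]
    ring
  obtain ⟨c, hc, hceq⟩ := exists_hasDerivAt_eq_slope G G' (by linarith : a - 1 < a)
    (fun x hx => by
      have hx0 : 0 < x := lt_of_lt_of_le (by linarith) hx.1
      exact (hG x hx0).continuousAt.continuousWithinAt)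
    (fun x hx => hG x (lt_of_lt_of_le (by linarith) hx.1.le))
  have hc0 : a - 1 < c := hc.1
  set F : ℝ → ℝ := fun y => y ^ (2 * H - 1) with hF_def
  set F' : ℝ → ℝ := fun y => (2 * H - 1) * y ^ (2 * H - 2) with hF'_def
  have hF : ∀ y : ℝ, 0 < y → HasDerivAt F (F' y) y := by
    intro y hy
    have := (hasDerivAt_id y).rpow_const (Or.inl (ne_of_gt hy)) (p := 2 * H - 1)
    convert this using 1
    · rfl
    simp only [hF'_def, id_eq]
    ring_nf
  obtain ⟨ξ, hξ, hξeq⟩ := exists_hasDerivAt_eq_slope F F' (by linarith : c < c + 1)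
    (fun y hy => by
      have hy0 : 0 < y := lt_of_lt_of_le (by linarith) hy.1
      exact (hF y hy0).continuousAt.continuousWithinAt)
    (fun y hy => hF y (by linarith [hy.1]))
  have hξ0 : a - 1 < ξ := by linarith [hξ.1, hc.1]
  -- |fbmRho| = H * |2H-1| * ξ^(2H-2)
  have hGdiff : G a - G (a - 1) = G' c := by
    rw [hceq]; field_simp; ring
  have hFdiff : (c + 1) ^ (2 * H - 1) - c ^ (2 * H - 1) = F' ξ := by
    rw [hξeq]; simp [hF_def]
  have hval : fbmRho H r = H * ((2 * H - 1) * ξ ^ (2 * H - 2)) := by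
    rw [hrho, hGdiff]
    simp only [hG'_def]
    rw [hFdiff]
    simp only [hF'_def]; ring
  have hξpos : (0:ℝ) < ξ := by linarith
  have hkey : ξ ^ (2 * H - 2) ≤ (a - 1) ^ (2 * H - 2) :=
    Real.rpow_le_rpow_of_nonpos (by linarith) hξ0.le (by linarith)
  rw [hval, abs_mul, abs_mul, abs_of_pos h0,
    abs_of_pos (Real.rpow_pos_of_pos hξpos _), mul_assoc]
  gcongr

/-- **Asymptotic variance of the quadratic variation of fractional Brownian
motion, case `H < 3/4`.** For `H ∈ (0, 3/4)`, `Σ_{r∈ℤ} ρ(r)² < ∞` and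
`σ_n²/n → 2 Σ_{r∈ℤ} ρ(r)²` as `n → ∞`. -/
theorem fbm_quadratic_variation_asymptotic_variance
    (H : ℝ) (h0 : 0 < H) (h1 : H < 3 / 4) :
    Summable (fun r : ℤ => (fbmRho H r) ^ 2) ∧
    Tendsto (fun n : ℕ => fbmSigmaSq H n / (n : ℝ)) atTop
      (nhds (2 * ∑' r : ℤ, (fbmRho H r) ^ 2)) := by
  have hH1 : H < 1 := by linarith
  -- summability
  have hbound : Summable (fun n : ℕ => (H * |2 * H - 1|) ^ 2 * ((n : ℝ) + 1) ^ (4 * H - 4)) := by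
    apply Summable.mul_left
    have h := Real.summable_nat_rpow.mpr (by linarith : 4 * H - 4 < -1)
    have h2 := (summable_nat_add_iff 1).mpr h
    refine h2.congr fun n => ?_
    push_cast
    rfl
  have hnat : Summable (fun n : ℕ => (fbmRho H (n : ℤ)) ^ 2) := by
    rw [← summable_nat_add_iff 2]
    refine Summable.of_nonneg_of_le (fun n => sq_nonneg _) (fun n => ?_) hbound
    have hle := abs_fbmRho_le H h0 hH1 ((n : ℤ) + 2) (by omega)
    have hcast : ((((n : ℤ) + 2) : ℤ) : ℝ) - 1 = (n : ℝ) + 1 := by push_cast; ring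
    rw [hcast] at hle
    calc (fbmRho H ((n : ℕ) + 2 : ℕ)) ^ 2 = |fbmRho H ((n : ℤ) + 2)| ^ 2 := by
          rw [sq_abs]; norm_cast
      _ ≤ (H * |2 * H - 1| * ((n : ℝ) + 1) ^ (2 * H - 2)) ^ 2 := by
          apply pow_le_pow_left₀ (abs_nonneg _) hle
      _ = (H * |2 * H - 1|) ^ 2 * ((n : ℝ) + 1) ^ (4 * H - 4) := by
          rw [mul_pow, ← Real.rpow_natCast (((n:ℝ)+1) ^ (2*H-2)) 2,
            ← Real.rpow_mul (by positivity),
            show (2*H-2)*((2:ℕ):ℝ) = 4*H-4 by push_cast; ring]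
  have hsummable : Summable (fun r : ℤ => (fbmRho H r) ^ 2) :=
    Summable.of_nat_of_neg (f := fun r : ℤ => (fbmRho H r)^2) hnat
      (hnat.congr fun n => by simp only [fbmRho_neg])
  refine ⟨hsummable, ?_⟩
  -- convergence
  set f : ℕ → ℤ → ℝ := fun n r => max 0 (((n : ℝ) - |(r : ℝ)|) / n) * fbmRho H r ^ 2 with hf_def
  have habs : ∀ r : ℤ, |(r : ℝ)| = ((|r| : ℤ) : ℝ) := fun r => by push_cast; rfl
  have htsum_eq : ∀ n : ℕ, 1 ≤ n → fbmSigmaSq H n / n = 2 * ∑' r : ℤ, f n r := by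
    intro n hn
    have hn0 : (0 : ℝ) < n := by exact_mod_cast hn
    rw [tsum_eq_sum (s := Finset.Ioo (-(n : ℤ)) (n : ℤ)) (fun r hr => by
      simp only [Finset.mem_Ioo, not_and_or, not_lt] at hr
      have : (n : ℝ) ≤ |(r : ℝ)| := by
        rw [habs]
        have : (n : ℤ) ≤ |r| := by
          rcases hr with h | h
          · rw [abs_of_nonpos (by omega)]; omega
          · rw [abs_of_nonneg (by omega)]; omega
        exact_mod_cast this
      simp only [hf_def]
      rw [max_eq_left (div_nonpos_of_nonpos_of_nonneg (by linarith) hn0.le)]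
      ring)]
    rw [fbmSigmaSq, mul_div_assoc, Finset.sum_div]
    congr 1
    apply Finset.sum_congr rfl
    intro r hr
    simp only [Finset.mem_Ioo] at hr
    have : 0 ≤ ((n : ℝ) - |(r : ℝ)|) := by
      rw [habs]
      have : |r| ≤ (n : ℤ) - 1 := by
        rw [abs_le]; omega
      have : ((|r| : ℤ) : ℝ) ≤ (n : ℝ) - 1 := by exact_mod_cast this
      linarith
    simp only [hf_def]
    rw [max_eq_right (by positivity)]
    ring
  have hpt : ∀ r : ℤ, Tendsto (fun n : ℕ => f n r) atTop (nhds (fbmRho H r ^ 2)) := by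
    intro r
    have h1' : Tendsto (fun n : ℕ => ((n : ℝ) - |(r : ℝ)|) / n) atTop (nhds 1) := by
      have : Tendsto (fun n : ℕ => 1 - |(r : ℝ)| / n) atTop (nhds 1) := by
        have := tendsto_const_div_atTop_nhds_zero_nat (|(r : ℝ)|)
        have h := (tendsto_const_nhds (x := (1:ℝ)) (f := atTop (α := ℕ))).sub this
        simpa using h
      refine this.congr' ?_
      filter_upwards [eventually_ge_atTop 1] with n hn
      have hn0 : (n : ℝ) ≠ 0 := by positivity
      field_simp
    have h2' : Tendsto (fun n : ℕ => max 0 (((n : ℝ) - |(r : ℝ)|) / n)) atTop (nhds 1) := by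
      have := (tendsto_const_nhds (x := (0:ℝ)) (f := atTop (α := ℕ))).max h1'
      simpa using this
    have := h2'.mul_const (fbmRho H r ^ 2)
    simpa [hf_def] using this
  have hdom : ∀ᶠ n in atTop, ∀ r : ℤ, ‖f n r‖ ≤ fbmRho H r ^ 2 := by
    refine Filter.Eventually.of_forall fun n r => ?_
    have hmax : max 0 (((n : ℝ) - |(r : ℝ)|) / n) ≤ 1 := by
      apply max_le zero_le_one
      rcases Nat.eq_zero_or_pos n with h | h
      · simp [h]
      · have hn0 : (0 : ℝ) < n := by exact_mod_cast h
        rw [div_le_one hn0]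
        have : 0 ≤ |(r : ℝ)| := abs_nonneg _
        linarith
    have h0' : 0 ≤ f n r := by
      simp only [hf_def]; positivity
    rw [Real.norm_eq_abs, abs_of_nonneg h0']
    simp only [hf_def]
    calc max 0 (((n : ℝ) - |(r : ℝ)|) / n) * fbmRho H r ^ 2 ≤ 1 * fbmRho H r ^ 2 := by
          apply mul_le_mul_of_nonneg_right hmax (sq_nonneg _)
      _ = fbmRho H r ^ 2 := one_mul _
  have hmain := tendsto_tsum_of_dominated_convergence hsummable hpt hdom
  have := hmain.const_mul (2 : ℝ)
  refine this.congr' ?_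
  filter_upwards [eventually_ge_atTop 1] with n hn
  exact (htsum_eq n hn).symm
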